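/- For every ε with 0 < ε < 1/2 and every positive integer n, there exists a closed subset E of ∂T such that cap^T(E) ≥ ε and cap^T_n(E) ≤ ε/(1 − 2ε). -/

import Mathlib

open scoped ENNReal NNReal
open Filter Topology

noncomputable section

/-- The vertex set of the dyadic tree `T`: finite binary strings. The boundary `∂T`
is the set of infinite binary sequences `ℕ → Bool`. `pre ζ k` is the prefix of
length `k` of the boundary point `ζ`. -/
def pre (ζ : ℕ → Bool) (k : ℕ) : List Bool := List.ofFn (fun i : Fin k => ζ i)

lemma tsum_list (h : List Bool → ℝ≥0∞) :
    ∑' x : List Bool, h x = ∑' k : ℕ, ∑ b : Fin k → Bool, h (List.ofFn b) := by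
  calc ∑' x : List Bool, h x
      = ∑' s : (Σ k : ℕ, Fin k → Bool), h ((List.equivSigmaTuple (α := Bool)).symm s) :=
        (Equiv.tsum_eq _ _).symm
    _ = ∑' k : ℕ, ∑' b : Fin k → Bool, h (List.ofFn b) := by
        rw [ENNReal.tsum_sigma']
        rfl
    _ = ∑' k : ℕ, ∑ b : Fin k → Bool, h (List.ofFn b) := by
        congr 1; funext k; exact tsum_fintype _

namespace TB

variable (n m : ℕ)

def free (i : ℕ) : Prop := i < n ∨ m ≤ i

instance : DecidablePred (free n m) := fun _ => inferInstanceAs (Decidable (_ ∨ _))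

def fcount (k : ℕ) : ℕ := min k n + (k - m)

def admF {k : ℕ} (b : Fin k → Bool) : Prop := ∀ i : Fin k, ¬ free n m i.1 → b i = false

instance {k : ℕ} : DecidablePred (admF n m (k := k)) := fun _ =>
  inferInstanceAs (Decidable (∀ _, _))

def pad {k : ℕ} (u : {i : Fin k // free n m i.1} → Bool) : Fin k → Bool :=
  fun i => if h : free n m i.1 then u ⟨i, h⟩ else false

lemma admF_pad {k : ℕ} (u : {i : Fin k // free n m i.1} → Bool) : admF n m (pad n m u) := by
  intro i hi
  simp [pad, hi]

def eAdm (k : ℕ) : ({i : Fin k // free n m i.1} → Bool) ≃ {b : Fin k → Bool // admF n m b} where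
  toFun u := ⟨pad n m u, admF_pad n m u⟩
  invFun b i := b.1 i.1
  left_inv u := by
    funext i
    simp [pad, i.2]
  right_inv b := by
    ext i
    by_cases h : free n m i.1
    · simp [pad, h]
    · simp [pad, h, b.2 i h]

lemma sum_pad {k : ℕ} (g : (Fin k → Bool) → ℝ≥0∞) :
    ∑ u : {i : Fin k // free n m i.1} → Bool, g (pad n m u)
      = ∑ b : Fin k → Bool, if admF n m b then g b else 0 := by
  rw [Finset.sum_ite, Finset.sum_const_zero, add_zero]
  rw [show (∑ x ∈ Finset.univ.filter (admF n m), g x) = ∑ b : {b : Fin k → Bool // admF n m b}, g b.1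
    from Finset.sum_subtype _ (by simp) _]
  exact Equiv.sum_comp (eAdm n m k) (fun s => g s.1)

lemma card_free (hnm : n ≤ m) (k : ℕ) :
    Fintype.card {i : Fin k // free n m i.1} = fcount n m k := by
  rw [Fintype.card_subtype]
  have h1 : (Finset.univ.filter (fun i : Fin k => free n m i.1)).card
      = ((Finset.range k).filter (free n m)).card := by
    rw [Finset.card_filter, Finset.card_filter]
    exact Fin.sum_univ_eq_sum_range (fun i => if free n m i then 1 else 0) k
  rw [h1]
  have h2 : (Finset.range k).filter (free n m)
      = Finset.range (min k n) ∪ Finset.Ico m k := by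
    ext i
    simp only [Finset.mem_filter, Finset.mem_range, Finset.mem_union, Finset.mem_Ico, free]
    omega
  rw [h2, Finset.card_union_of_disjoint, Finset.card_range, Nat.card_Ico]
  · rfl
  · rw [Finset.disjoint_left]
    intro a ha hb
    simp only [Finset.mem_range, Finset.mem_Ico] at ha hb
    omega

lemma sum_ite_const (hnm : n ≤ m) {k : ℕ} (c : ℝ≥0∞) :
    ∑ b : Fin k → Bool, (if admF n m b then c else 0) = 2 ^ fcount n m k * c := by
  rw [← sum_pad]
  rw [Finset.sum_const, Finset.card_univ, Fintype.card_fun, card_free n m hnm,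
    Fintype.card_bool, nsmul_eq_mul]
  push_cast
  ring

lemma half_sub : (1 : ℝ≥0∞) - 2⁻¹ = 2⁻¹ := by
  rw [ENNReal.sub_eq_of_eq_add (by simp)]
  rw [ENNReal.inv_two_add_inv_two]

lemma seriesA (hnm : n ≤ m) :
    ∑' k : ℕ, (if n ≤ k then ((2 : ℝ≥0∞)⁻¹) ^ (fcount n m k) else 0)
      = (((m - n : ℕ) : ℝ≥0∞) + 2) * (2 : ℝ≥0∞)⁻¹ ^ n := by
  have hsplit : ∀ k : ℕ, (if n ≤ k then ((2 : ℝ≥0∞)⁻¹) ^ (fcount n m k) else 0)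
      = (if n ≤ k ∧ k < m then (2 : ℝ≥0∞)⁻¹ ^ n else 0)
        + (if m ≤ k then ((2 : ℝ≥0∞)⁻¹) ^ (fcount n m k) else 0) := by
    intro k
    rcases Nat.lt_or_ge k m with h | h
    · by_cases h2 : n ≤ k
      · have hf : fcount n m k = n := by unfold fcount; omega
        simp [h2, h, hf, Nat.not_le.mpr h]
      · rw [if_neg h2, if_neg (by omega), if_neg (by omega)]
        simp
    · have h2 : n ≤ k := hnm.trans h
      simp [h2, h, Nat.not_lt.mpr h]
  rw [tsum_congr hsplit, ENNReal.tsum_add]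
  have h1 : ∑' k : ℕ, (if n ≤ k ∧ k < m then (2 : ℝ≥0∞)⁻¹ ^ n else 0)
      = ((m - n : ℕ) : ℝ≥0∞) * (2 : ℝ≥0∞)⁻¹ ^ n := by
    rw [tsum_eq_sum (s := Finset.range m)
      (fun k hk => by simp only [Finset.mem_range] at hk; exact if_neg (by omega))]
    rw [Finset.sum_ite, Finset.sum_const_zero, add_zero, Finset.sum_const]
    have : (Finset.range m).filter (fun k => n ≤ k ∧ k < m) = Finset.Ico n m := by
      ext i
      simp only [Finset.mem_filter, Finset.mem_range, Finset.mem_Ico]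
      omega
    rw [this, Nat.card_Ico, nsmul_eq_mul]
  have h2 : ∑' k : ℕ, (if m ≤ k then ((2 : ℝ≥0∞)⁻¹) ^ (fcount n m k) else 0)
      = 2 * (2 : ℝ≥0∞)⁻¹ ^ n := by
    have hinj : Function.Injective (fun j : ℕ => j + m) := fun a b h => by
      simp only at h; omega
    have hsupp : Function.support (fun k : ℕ => if m ≤ k then ((2 : ℝ≥0∞)⁻¹) ^ (fcount n m k) else 0)
        ⊆ Set.range (fun j : ℕ => j + m) := by
      intro k hk
      simp only [Function.mem_support, ne_eq, ite_eq_right_iff, not_forall] at hk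
      obtain ⟨hmk, -⟩ := hk
      exact ⟨k - m, by simp only; omega⟩
    rw [← hinj.tsum_eq hsupp]
    have : ∀ j : ℕ, (if m ≤ j + m then ((2 : ℝ≥0∞)⁻¹) ^ (fcount n m (j + m)) else 0)
        = (2 : ℝ≥0∞)⁻¹ ^ n * (2 : ℝ≥0∞)⁻¹ ^ j := by
      intro j
      have hf : fcount n m (j + m) = n + j := by unfold fcount; omega
      simp only [Nat.le_add_left, if_pos, hf, pow_add]
    rw [tsum_congr this, ENNReal.tsum_mul_left, ENNReal.tsum_geometric, half_sub, inv_inv]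
    ring
  rw [h1, h2]
  ring

lemma seriesB (hnm : n ≤ m) :
    ∑' k : ℕ, ((2 : ℝ≥0∞)⁻¹) ^ (fcount n m k)
      = (∑ k ∈ Finset.range n, (2 : ℝ≥0∞)⁻¹ ^ k)
        + (((m - n : ℕ) : ℝ≥0∞) + 2) * (2 : ℝ≥0∞)⁻¹ ^ n := by
  have hsplit : ∀ k : ℕ, ((2 : ℝ≥0∞)⁻¹) ^ (fcount n m k)
      = (if k < n then (2 : ℝ≥0∞)⁻¹ ^ k else 0)
        + (if n ≤ k then ((2 : ℝ≥0∞)⁻¹) ^ (fcount n m k) else 0) := by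
    intro k
    by_cases h : k < n
    · have hf : fcount n m k = k := by unfold fcount; omega
      simp [h, Nat.not_le.mpr h, hf]
    · simp [h, Nat.le_of_not_lt h]
  rw [tsum_congr hsplit, ENNReal.tsum_add, seriesA n m hnm]
  congr 1
  have h := tsum_eq_sum (L := SummationFilter.unconditional ℕ) (s := Finset.range n)
    (f := fun k => if k < n then (2 : ℝ≥0∞)⁻¹ ^ k else 0)
    (fun k hk => by simp only [Finset.mem_range] at hk; simp [hk])
  rw [h]
  exact Finset.sum_congr rfl fun k hk => by
    simp only [Finset.mem_range] at hk; simp [hk]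

def Eset : Set (ℕ → Bool) := {ζ | ∀ i, ¬ free n m i → ζ i = false}

lemma isClosed_Eset : IsClosed (Eset n m) := by
  have h : Eset n m = ⋂ i, {ζ : ℕ → Bool | ¬ free n m i → ζ i = false} := by
    ext ζ; simp [Eset]
  rw [h]
  refine isClosed_iInter fun i => ?_
  by_cases h : free n m i
  · have : {ζ : ℕ → Bool | ¬ free n m i → ζ i = false} = Set.univ := by
      ext ζ; simp [h]
    rw [this]; exact isClosed_univ
  · have : {ζ : ℕ → Bool | ¬ free n m i → ζ i = false}
        = (fun ζ : ℕ → Bool => ζ i) ⁻¹' {false} := by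
      ext ζ; simp [h]
    rw [this]
    exact (isClosed_discrete _).preimage (continuous_apply i)


lemma fcount_le (hnm : n ≤ m) (k : ℕ) : fcount n m k ≤ k := by
  unfold fcount; omega

lemma pow_two_cancel (f : ℕ) : (2 : ℝ≥0∞) ^ f * ((2 : ℝ≥0∞)⁻¹ ^ f) = 1 := by
  rw [← ENNReal.inv_pow, ENNReal.mul_inv_cancel (by positivity) (by simp)]

def ζfun (D : ℕ) (b : Fin D → Bool) : ℕ → Bool :=
  fun i => if h : i < D then (if free n m i then b ⟨i, h⟩ else false) else false

lemma ζfun_mem (D : ℕ) (b : Fin D → Bool) : ζfun n m D b ∈ Eset n m := by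
  intro i hi
  unfold ζfun
  by_cases h : i < D <;> simp [h, hi]

lemma cardp (hnm : n ≤ m) {k D : ℕ} (hk : k ≤ D) :
    Fintype.card {j : Fin D // free n m j.1 ∧ j.1 < k} = fcount n m k := by
  rw [← card_free n m hnm k]
  refine Fintype.card_congr ?_
  exact {
    toFun := fun j => ⟨⟨j.1.1, j.2.2⟩, j.2.1⟩
    invFun := fun i => ⟨⟨i.1.1, lt_of_lt_of_le i.1.2 hk⟩, ⟨i.2, i.1.2⟩⟩
    left_inv := fun j => by ext; rfl
    right_inv := fun i => by ext; rfl }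

lemma claim1 (hnm : n ≤ m) (φ : List Bool → ℝ≥0) {D k : ℕ} (hk : k < D) :
    ∑ b : Fin D → Bool, (φ (pre (ζfun n m D b) k) : ℝ≥0∞)
      = 2 ^ (D - fcount n m k)
        * ∑ b : Fin k → Bool, (if admF n m b then (φ (List.ofFn b) : ℝ≥0∞) else 0) := by
  have hpre : ∀ b : Fin D → Bool, pre (ζfun n m D b) k
      = List.ofFn (fun i : Fin k => if free n m i.1 then b ⟨i.1, lt_trans i.2 hk⟩ else false) := by
    intro b
    unfold pre ζfun
    congr 1
    funext i
    rw [dif_pos (lt_trans i.2 hk)]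
  simp only [hpre]
  set p : Fin D → Prop := fun j => free n m j.1 ∧ j.1 < k with hp
  have hcard : Fintype.card {x // p x} = fcount n m k := cardp n m hnm hk.le
  set e := (Equiv.piEquivPiSubtypeProd p (fun _ => Bool)).symm with he
  set G : (Fin D → Bool) → ℝ≥0∞ := fun b =>
    (φ (List.ofFn (fun i : Fin k => if free n m i.1 then b ⟨i.1, lt_trans i.2 hk⟩ else false)) : ℝ≥0∞)
    with hG
  have h1 : ∑ b : Fin D → Bool, G b = ∑ y, G (e y) := (Equiv.sum_comp e G).symm
  have h2 : ∀ (u : {j : Fin D // p j} → Bool) (w : {j : Fin D // ¬ p j} → Bool),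
      G (e (u, w)) = (φ (List.ofFn (fun i : Fin k =>
        if h : free n m i.1 then u ⟨⟨i.1, lt_trans i.2 hk⟩, ⟨h, i.2⟩⟩ else false)) : ℝ≥0∞) := by
    intro u w
    show (φ (List.ofFn (fun i : Fin k =>
        if free n m i.1 then (e (u, w)) ⟨i.1, lt_trans i.2 hk⟩ else false)) : ℝ≥0∞) = _
    congr 2
    congr 1
    funext i
    by_cases h : free n m i.1
    · rw [if_pos h, dif_pos h, he]
      rw [Equiv.piEquivPiSubtypeProd_symm_apply]
      rw [dif_pos (show p ⟨i.1, lt_trans i.2 hk⟩ from ⟨h, i.2⟩)]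
    · rw [if_neg h, dif_neg h]
  rw [show (∑ b : Fin D → Bool, G b) = ∑ y, G (e y) from h1, Fintype.sum_prod_type]
  have h3 : ∑ u : {j : Fin D // p j} → Bool, ∑ w : {j : Fin D // ¬ p j} → Bool, G (e (u, w))
      = ∑ u : {j : Fin D // p j} → Bool, (2 : ℝ≥0∞) ^ (D - fcount n m k) *
          (φ (List.ofFn (fun i : Fin k =>
            if h : free n m i.1 then u ⟨⟨i.1, lt_trans i.2 hk⟩, ⟨h, i.2⟩⟩ else false)) : ℝ≥0∞) := by
    refine Finset.sum_congr rfl fun u _ => ?_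
    rw [Finset.sum_congr rfl (fun w _ => h2 u w), Finset.sum_const, Finset.card_univ]
    have hcardW : Fintype.card ({j : Fin D // ¬ p j} → Bool) = 2 ^ (D - fcount n m k) := by
      rw [Fintype.card_fun, Fintype.card_bool, Fintype.card_subtype_compl, Fintype.card_fin, hcard]
    rw [hcardW, nsmul_eq_mul]
    push_cast
    ring
  rw [h3, ← Finset.mul_sum]
  congr 1
  rw [← sum_pad n m (fun b => (φ (List.ofFn b) : ℝ≥0∞))]
  set e2 : {j : Fin D // p j} ≃ {i : Fin k // free n m i.1} := {
    toFun := fun j => ⟨⟨j.1.1, j.2.2⟩, j.2.1⟩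
    invFun := fun i => ⟨⟨i.1.1, lt_of_lt_of_le i.1.2 hk.le⟩, ⟨i.2, i.1.2⟩⟩
    left_inv := fun j => by ext; rfl
    right_inv := fun i => by ext; rfl } with he2
  refine Fintype.sum_equiv (Equiv.arrowCongr e2 (Equiv.refl Bool)) _ _ fun u => ?_
  congr 2

lemma pow_sub_eq {f D : ℕ} (h : f ≤ D) :
    (2 : ℝ≥0∞) ^ (D - f) = 2 ^ D * (2 : ℝ≥0∞)⁻¹ ^ f := by
  rw [← ENNReal.inv_pow]
  have h2 : (2 : ℝ≥0∞) ^ D = 2 ^ (D - f) * 2 ^ f := by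
    rw [← pow_add]; congr 1; omega
  rw [h2, mul_assoc, ENNReal.mul_inv_cancel (by positivity) (ENNReal.pow_ne_top ENNReal.ofNat_ne_top),
    mul_one]

lemma avg (hnm : n ≤ m) (φ : List Bool → ℝ≥0) (D : ℕ) :
    ∃ ζ ∈ Eset n m, ∑ k ∈ Finset.range D, (φ (pre ζ k) : ℝ≥0∞)
      ≤ ∑' k : ℕ, (2 : ℝ≥0∞)⁻¹ ^ (fcount n m k)
          * ∑ b : Fin k → Bool, (if admF n m b then (φ (List.ofFn b) : ℝ≥0∞) else 0) := by
  set A : ℕ → ℝ≥0∞ := fun k =>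
    ∑ b : Fin k → Bool, (if admF n m b then (φ (List.ofFn b) : ℝ≥0∞) else 0) with hA
  set P : (Fin D → Bool) → ℝ≥0∞ := fun b =>
    ∑ k ∈ Finset.range D, (φ (pre (ζfun n m D b) k) : ℝ≥0∞) with hP
  have hsum : ∑ b : Fin D → Bool, P b
      = 2 ^ D * ∑ k ∈ Finset.range D, (2 : ℝ≥0∞)⁻¹ ^ (fcount n m k) * A k := by
    rw [hP, Finset.sum_comm, Finset.mul_sum]
    refine Finset.sum_congr rfl fun k hk => ?_
    rw [claim1 n m hnm φ (Finset.mem_range.mp hk)]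
    have hf : fcount n m k ≤ D := (fcount_le n m hnm k).trans (Finset.mem_range.mp hk).le
    rw [pow_sub_eq hf, mul_assoc]
  obtain ⟨b₀, -, hb₀⟩ := Finset.exists_min_image Finset.univ P ⟨fun _ => false, Finset.mem_univ _⟩
  refine ⟨ζfun n m D b₀, ζfun_mem n m D b₀, ?_⟩
  have hcardB : (Finset.univ : Finset (Fin D → Bool)).card = 2 ^ D := by
    rw [Finset.card_univ, Fintype.card_fun, Fintype.card_bool, Fintype.card_fin]
  have h1 : (2 ^ D : ℝ≥0∞) * P b₀
      ≤ 2 ^ D * ∑ k ∈ Finset.range D, (2 : ℝ≥0∞)⁻¹ ^ (fcount n m k) * A k := by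
    calc (2 ^ D : ℝ≥0∞) * P b₀ = ∑ _b : Fin D → Bool, P b₀ := by
          rw [Finset.sum_const, hcardB, nsmul_eq_mul]; push_cast; ring
      _ ≤ ∑ b : Fin D → Bool, P b := Finset.sum_le_sum fun b _ => hb₀ b (Finset.mem_univ b)
      _ = _ := hsum
  have h2 : P b₀ ≤ ∑ k ∈ Finset.range D, (2 : ℝ≥0∞)⁻¹ ^ (fcount n m k) * A k :=
    (ENNReal.mul_le_mul_iff_right (by positivity) (ENNReal.pow_ne_top ENNReal.ofNat_ne_top)).mp h1
  exact h2.trans (ENNReal.sum_le_tsum _)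

lemma lower_T (hnm : n ≤ m) (φ : List Bool → ℝ≥0)
    (hφ : ∀ ζ ∈ Eset n m, 1 ≤ ∑' k : ℕ, (φ (pre ζ k) : ℝ≥0∞)) :
    1 ≤ ∑' k : ℕ, (2 : ℝ≥0∞)⁻¹ ^ (fcount n m k)
          * ∑ b : Fin k → Bool, (if admF n m b then (φ (List.ofFn b) : ℝ≥0∞) else 0) := by
  set T := ∑' k : ℕ, (2 : ℝ≥0∞)⁻¹ ^ (fcount n m k)
          * ∑ b : Fin k → Bool, (if admF n m b then (φ (List.ofFn b) : ℝ≥0∞) else 0) with hT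
  have hcont : ∀ k : ℕ, Continuous fun ζ : ℕ → Bool => (φ (pre ζ k) : ℝ≥0∞) := by
    intro k
    have h : (fun ζ : ℕ → Bool => (φ (pre ζ k) : ℝ≥0∞))
        = (fun y : Fin k → Bool => (φ (List.ofFn y) : ℝ≥0∞)) ∘ (fun ζ (i : Fin k) => ζ i.1) := rfl
    rw [h]
    exact Continuous.comp continuous_of_discreteTopology
      (continuous_pi fun i => continuous_apply i.1)
  set C : ℕ → Set (ℕ → Bool) := fun D =>
    Eset n m ∩ {ζ | ∑ k ∈ Finset.range D, (φ (pre ζ k) : ℝ≥0∞) ≤ T} with hC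
  have hclosed : ∀ D, IsClosed (C D) := fun D =>
    (isClosed_Eset n m).inter
      (isClosed_le (continuous_finset_sum _ fun k _ => hcont k) continuous_const)
  have hne : ∀ D, (C D).Nonempty := fun D => by
    obtain ⟨ζ, h1, h2⟩ := avg n m hnm φ D
    exact ⟨ζ, h1, h2⟩
  have hdec : ∀ D, C (D + 1) ⊆ C D := by
    intro D ζ hζ
    have h2 : ∑ k ∈ Finset.range (D + 1), (φ (pre ζ k) : ℝ≥0∞) ≤ T := hζ.2
    exact ⟨hζ.1, le_trans (Finset.sum_le_sum_of_subset
      (Finset.range_subset_range.mpr (Nat.le_succ D))) h2⟩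
  obtain ⟨ζ, hζ⟩ := IsCompact.nonempty_iInter_of_sequence_nonempty_isCompact_isClosed
    C hdec hne (hclosed 0).isCompact hclosed
  simp only [Set.mem_iInter] at hζ
  have hE : ζ ∈ Eset n m := (hζ 0).1
  have hle : ∑' k : ℕ, (φ (pre ζ k) : ℝ≥0∞) ≤ T :=
    ENNReal.tsum_le_of_sum_range_le fun D => (hζ D).2
  exact le_trans (hφ ζ hE) hle

lemma amgm (a b : ℝ≥0∞) : 2 * a * b ≤ a ^ 2 + b ^ 2 := by
  rcases eq_or_ne a ⊤ with ha | ha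
  · have h : a ^ 2 + b ^ 2 = ⊤ := by
      rw [ha]; simp [ENNReal.top_pow]
    rw [h]; exact le_top
  rcases eq_or_ne b ⊤ with hb | hb
  · have h : a ^ 2 + b ^ 2 = ⊤ := by
      rw [hb]; simp [ENNReal.top_pow]
    rw [h]; exact le_top
  lift a to ℝ≥0 using ha
  lift b to ℝ≥0 using hb
  have h : 2 * a * b ≤ a ^ 2 + b ^ 2 := by
    rw [← NNReal.coe_le_coe]
    push_cast
    nlinarith [sq_nonneg ((a : ℝ) - (b : ℝ))]
  exact_mod_cast h

lemma cap_lower_energy (hnm : n ≤ m) (e : ℝ≥0∞) (he : e ≠ ⊤)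
    (hR : e * (∑' k : ℕ, (2 : ℝ≥0∞)⁻¹ ^ (fcount n m k)) ≤ 1)
    (φ : List Bool → ℝ≥0)
    (hφ : ∀ ζ ∈ Eset n m, 1 ≤ ∑' k : ℕ, (φ (pre ζ k) : ℝ≥0∞)) :
    e ≤ ∑' x : List Bool, (φ x : ℝ≥0∞) ^ 2 := by
  set A : ℕ → ℝ≥0∞ := fun k =>
    ∑ b : Fin k → Bool, (if admF n m b then (φ (List.ofFn b) : ℝ≥0∞) else 0) with hA
  set L : ℕ → ℝ≥0∞ := fun k => ∑ b : Fin k → Bool, (φ (List.ofFn b) : ℝ≥0∞) ^ 2 with hL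
  have hT : 1 ≤ ∑' k : ℕ, (2 : ℝ≥0∞)⁻¹ ^ (fcount n m k) * A k := lower_T n m hnm φ hφ
  have hlevel : ∀ k : ℕ, 2 * e * ((2 : ℝ≥0∞)⁻¹ ^ (fcount n m k) * A k)
      ≤ L k + e ^ 2 * (2 : ℝ≥0∞)⁻¹ ^ (fcount n m k) := by
    intro k
    set c : ℝ≥0∞ := (2 : ℝ≥0∞)⁻¹ ^ (fcount n m k) with hc
    have hcc : (2 : ℝ≥0∞) ^ (fcount n m k) * c ^ 2 = c := by
      rw [sq, ← mul_assoc, pow_two_cancel, one_mul]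
    calc 2 * e * (c * A k) = (2 * (e * c)) * A k := by ring
      _ = ∑ b : Fin k → Bool,
          (2 * (e * c)) * (if admF n m b then (φ (List.ofFn b) : ℝ≥0∞) else 0) :=
          Finset.mul_sum _ _ _
      _ = ∑ b : Fin k → Bool,
          (if admF n m b then 2 * (e * c) * (φ (List.ofFn b) : ℝ≥0∞) else 0) := by
          refine Finset.sum_congr rfl fun b _ => ?_
          by_cases h : admF n m b <;> simp [h]
      _ ≤ ∑ b : Fin k → Bool,
          ((φ (List.ofFn b) : ℝ≥0∞) ^ 2 + if admF n m b then (e * c) ^ 2 else 0) := by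
          refine Finset.sum_le_sum fun b _ => ?_
          by_cases h : admF n m b
          · rw [if_pos h, if_pos h, add_comm]
            exact amgm (e * c) _
          · rw [if_neg h, if_neg h, add_zero]
            exact zero_le
      _ = L k + ∑ b : Fin k → Bool, (if admF n m b then (e * c) ^ 2 else 0) := by
          rw [Finset.sum_add_distrib, hL]
      _ = L k + 2 ^ (fcount n m k) * (e * c) ^ 2 := by
          rw [sum_ite_const n m hnm]
      _ = L k + e ^ 2 * c := by
          congr 1
          rw [mul_pow, ← mul_assoc, mul_comm ((2:ℝ≥0∞) ^ (fcount n m k)) (e ^ 2), mul_assoc, hcc]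
  have hsum : 2 * e * (∑' k : ℕ, (2 : ℝ≥0∞)⁻¹ ^ (fcount n m k) * A k)
      ≤ (∑' k : ℕ, L k) + e ^ 2 * (∑' k : ℕ, (2 : ℝ≥0∞)⁻¹ ^ (fcount n m k)) := by
    calc 2 * e * (∑' k : ℕ, (2 : ℝ≥0∞)⁻¹ ^ (fcount n m k) * A k)
        = ∑' k : ℕ, 2 * e * ((2 : ℝ≥0∞)⁻¹ ^ (fcount n m k) * A k) := by
          rw [ENNReal.tsum_mul_left]
      _ ≤ ∑' k : ℕ, (L k + e ^ 2 * (2 : ℝ≥0∞)⁻¹ ^ (fcount n m k)) :=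
          ENNReal.tsum_le_tsum hlevel
      _ = _ := by rw [ENNReal.tsum_add, ENNReal.tsum_mul_left]
  have hLE : (∑' k : ℕ, L k) = ∑' x : List Bool, (φ x : ℝ≥0∞) ^ 2 :=
    (tsum_list (fun x => (φ x : ℝ≥0∞) ^ 2)).symm
  have h2 : e + e ≤ (∑' x : List Bool, (φ x : ℝ≥0∞) ^ 2) + e := by
    calc e + e = 2 * e * 1 := by ring
      _ ≤ 2 * e * (∑' k : ℕ, (2 : ℝ≥0∞)⁻¹ ^ (fcount n m k) * A k) := by
          exact mul_le_mul_right hT _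
      _ ≤ (∑' k : ℕ, L k) + e ^ 2 * (∑' k : ℕ, (2 : ℝ≥0∞)⁻¹ ^ (fcount n m k)) := hsum
      _ ≤ (∑' x : List Bool, (φ x : ℝ≥0∞) ^ 2) + e := by
          rw [hLE]
          refine add_le_add_right ?_ _
          calc e ^ 2 * (∑' k : ℕ, (2 : ℝ≥0∞)⁻¹ ^ (fcount n m k))
              = e * (e * (∑' k : ℕ, (2 : ℝ≥0∞)⁻¹ ^ (fcount n m k))) := by ring
            _ ≤ e * 1 := mul_le_mul_right hR _
            _ = e := mul_one e
  exact (ENNReal.add_le_add_iff_right he).mp h2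

def admL (x : List Bool) : Prop := admF n m (fun i : Fin x.length => x.get i)

instance : DecidablePred (admL n m) := fun x =>
  inferInstanceAs (Decidable (admF n m _))

lemma admL_ofFn {k : ℕ} (b : Fin k → Bool) : admL n m (List.ofFn b) ↔ admF n m b := by
  unfold admL
  have hlen : (List.ofFn b).length = k := List.length_ofFn
  constructor
  · intro h i hi
    have h2 := h (Fin.cast hlen.symm i) (by simpa using hi)
    simp only at h2
    rw [List.get_ofFn] at h2
    simpa using h2
  · intro h i hi
    show (List.ofFn b).get i = false
    rw [List.get_ofFn]
    exact h _ (by simpa using hi)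

lemma admL_pre (ζ : ℕ → Bool) (hζ : ζ ∈ Eset n m) (k : ℕ) : admL n m (pre ζ k) := by
  rw [show pre ζ k = List.ofFn (fun i : Fin k => ζ i.1) from rfl, admL_ofFn]
  intro i hi
  exact hζ i.1 hi

def Rn : ℝ≥0 := ((m - n : ℕ) + 2) * 2⁻¹ ^ n

lemma Rn_ne : Rn n m ≠ 0 := by
  unfold Rn
  positivity

lemma Rn_coe : ((Rn n m : ℝ≥0) : ℝ≥0∞) = (((m - n : ℕ) : ℝ≥0∞) + 2) * (2 : ℝ≥0∞)⁻¹ ^ n := by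
  unfold Rn
  push_cast [ENNReal.coe_inv (two_ne_zero)]
  ring

def φ₀ : List Bool → ℝ≥0 := fun x =>
  if n ≤ x.length ∧ admL n m x then (Rn n m)⁻¹ * 2⁻¹ ^ (fcount n m x.length) else 0

lemma φ₀_vanish (x : List Bool) (hx : x.length < n) : φ₀ n m x = 0 := by
  unfold φ₀
  rw [if_neg]
  rintro ⟨h1, -⟩
  omega

lemma coe_half : ((2⁻¹ : ℝ≥0) : ℝ≥0∞) = (2 : ℝ≥0∞)⁻¹ := by
  rw [ENNReal.coe_inv (two_ne_zero)]
  norm_num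

lemma const_φ₀ (hnm : n ≤ m) (ζ : ℕ → Bool) (hζ : ζ ∈ Eset n m) :
    ∑' k : ℕ, (φ₀ n m (pre ζ k) : ℝ≥0∞) = 1 := by
  have hval : ∀ k : ℕ, (φ₀ n m (pre ζ k) : ℝ≥0∞)
      = ((Rn n m)⁻¹ : ℝ≥0) * (if n ≤ k then (2 : ℝ≥0∞)⁻¹ ^ (fcount n m k) else 0) := by
    intro k
    have hlen : (pre ζ k).length = k := List.length_ofFn
    unfold φ₀
    by_cases h : n ≤ k
    · rw [if_pos ⟨by omega, admL_pre n m ζ hζ k⟩, if_pos h, hlen]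
      push_cast [coe_half]
      ring
    · rw [if_neg (by rw [hlen]; rintro ⟨h1, -⟩; exact h h1), if_neg h]
      simp
  rw [tsum_congr hval, ENNReal.tsum_mul_left, seriesA n m hnm, ← Rn_coe, ← ENNReal.coe_mul,
    inv_mul_cancel₀ (Rn_ne n m), ENNReal.coe_one]

lemma energy_φ₀ (hnm : n ≤ m) :
    ∑' x : List Bool, (φ₀ n m x : ℝ≥0∞) ^ 2 = ((Rn n m)⁻¹ : ℝ≥0) := by
  rw [tsum_list]
  have hlevel : ∀ k : ℕ, ∑ b : Fin k → Bool, (φ₀ n m (List.ofFn b) : ℝ≥0∞) ^ 2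
      = (((Rn n m)⁻¹ : ℝ≥0) : ℝ≥0∞) ^ 2
          * (if n ≤ k then (2 : ℝ≥0∞)⁻¹ ^ (fcount n m k) else 0) := by
    intro k
    have hval : ∀ b : Fin k → Bool, (φ₀ n m (List.ofFn b) : ℝ≥0∞) ^ 2
        = (if admF n m b then
            (if n ≤ k then
              ((((Rn n m)⁻¹ : ℝ≥0) : ℝ≥0∞) * (2 : ℝ≥0∞)⁻¹ ^ (fcount n m k)) ^ 2 else 0)
           else 0) := by
      intro b
      unfold φ₀
      have hlen : (List.ofFn b).length = k := List.length_ofFn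
      by_cases hb : admF n m b
      · by_cases h : n ≤ k
        · rw [if_pos ⟨by omega, (admL_ofFn n m b).mpr hb⟩, if_pos hb, if_pos h, hlen]
          push_cast [coe_half]
          ring
        · rw [if_neg ?_, if_pos hb, if_neg h]
          · simp
          · rintro ⟨h1, -⟩; omega
      · rw [if_neg ?_, if_neg hb]
        · simp
        · rintro ⟨-, h2⟩; exact hb ((admL_ofFn n m b).mp h2)
    rw [Finset.sum_congr rfl (fun b _ => hval b), sum_ite_const n m hnm]
    by_cases h : n ≤ k
    · rw [if_pos h, if_pos h, mul_pow]
      have hcc : (2 : ℝ≥0∞) ^ (fcount n m k) * ((2 : ℝ≥0∞)⁻¹ ^ (fcount n m k)) ^ 2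
          = (2 : ℝ≥0∞)⁻¹ ^ (fcount n m k) := by
        rw [sq, ← mul_assoc, pow_two_cancel, one_mul]
      rw [← mul_assoc, mul_comm ((2:ℝ≥0∞) ^ (fcount n m k)) _, mul_assoc, hcc]
    · rw [if_neg h, if_neg h, mul_zero, mul_zero]
  rw [tsum_congr hlevel, ENNReal.tsum_mul_left, seriesA n m hnm, ← Rn_coe, ← ENNReal.coe_pow,
    ← ENNReal.coe_mul]
  congr 1
  rw [sq, mul_assoc, inv_mul_cancel₀ (Rn_ne n m), mul_one]

end TB

/-- The tree condenser capacity `cap^T_n(E)`: the infimum of `Σ_x φ(x)²` over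
`φ : T → [0,∞)` with `Iφ(ζ) = Σ_{x ∈ P(ζ)} φ(x) ≥ 1` on `E` and `φ(x) = 0`
whenever `d(x) ≤ n-1`.  For `n = 0` this is the tree capacity `cap^T(E)`. -/
noncomputable def treeCapN (n : ℕ) (E : Set (ℕ → Bool)) : ℝ≥0∞ :=
  sInf { c | ∃ φ : List Bool → ℝ≥0,
    (∀ ζ ∈ E, 1 ≤ ∑' k : ℕ, (φ (pre ζ k) : ℝ≥0∞)) ∧
    (∀ x : List Bool, x.length < n → φ x = 0) ∧
    c = ∑' x : List Bool, (φ x : ℝ≥0∞) ^ 2 }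

/-- The tree capacity `cap^T(E)` of a set `E ⊆ ∂T`. -/
noncomputable def treeCap (E : Set (ℕ → Bool)) : ℝ≥0∞ := treeCapN 0 E

/-- For every `ε` with `0 < ε < 1/2` and every positive integer `n`,
there exists a closed subset `E` of `∂T` such that `cap^T(E) ≥ ε` and
`cap^T_n(E) ≤ ε/(1 - 2ε)`. -/
theorem tree_no_asymptotic_blowup (ε : ℝ) (h0 : 0 < ε) (h1 : ε < 1/2)
    (n : ℕ) (hn : 1 ≤ n) :
    ∃ E : Set (ℕ → Bool), IsClosed E ∧
      ENNReal.ofReal ε ≤ treeCap E ∧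
      treeCapN n E ≤ ENNReal.ofReal (ε / (1 - 2 * ε)) := by
  have h2ε : 0 < 1 - 2 * ε := by linarith
  set t : ℝ := (2⁻¹ : ℝ) ^ n with ht
  have htpos : 0 < t := by positivity
  set v : ℝ := 2 ^ n * ((1 - 2 * ε) / ε) with hv
  have hvpos : 0 < v := by positivity
  have hvt : v * t = (1 - 2 * ε) / ε := by
    have h2t : (2 : ℝ) ^ n * t = 1 := by rw [ht, ← mul_pow]; norm_num
    calc v * t = ((2 : ℝ) ^ n * t) * ((1 - 2 * ε) / ε) := by rw [hv]; ring
      _ = (1 - 2 * ε) / ε := by rw [h2t, one_mul]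
  set K : ℕ := max 2 ⌈v⌉₊ with hK
  have hK2 : 2 ≤ K := le_max_left _ _
  have hKv : v ≤ (K : ℝ) := le_trans (Nat.le_ceil v) (Nat.cast_le.mpr (le_max_right _ _))
  have hKv2 : (K : ℝ) ≤ v + 2 := by
    rcases max_choice 2 ⌈v⌉₊ with h | h
    · rw [hK, h]; push_cast; linarith
    · rw [hK, h]
      have h3 := Nat.ceil_lt_add_one hvpos.le
      linarith
  set m : ℕ := n + (K - 2) with hm
  have hnm : n ≤ m := Nat.le_add_right _ _
  have hmn : (m - n) + 2 = K := by omega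
  have hhalfpow : ∀ k : ℕ, (2 : ℝ≥0∞)⁻¹ ^ k = ENNReal.ofReal ((2⁻¹ : ℝ) ^ k) := by
    intro k
    rw [ENNReal.ofReal_pow (by norm_num)]
    congr 1
    rw [ENNReal.ofReal_inv_of_pos (by norm_num)]
    simp [ENNReal.ofReal_ofNat]
  have hgeom : ∑ k ∈ Finset.range n, (2⁻¹ : ℝ) ^ k = 2 - 2 * t := by
    have h := geom_sum_eq (by norm_num : (2⁻¹ : ℝ) ≠ 1) n
    rw [h, ht, div_eq_iff (by norm_num : (2⁻¹ : ℝ) - 1 ≠ 0)]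
    ring
  refine ⟨TB.Eset n m, TB.isClosed_Eset n m, ?_, ?_⟩
  · -- lower bound on treeCap
    rw [treeCap, treeCapN]
    refine le_sInf ?_
    rintro c ⟨φ, hφ1, -, rfl⟩
    refine TB.cap_lower_energy n m hnm (ENNReal.ofReal ε) ENNReal.ofReal_ne_top ?_ φ hφ1
    rw [TB.seriesB n m hnm]
    have e1 : (∑ k ∈ Finset.range n, (2 : ℝ≥0∞)⁻¹ ^ k)
        = ENNReal.ofReal (∑ k ∈ Finset.range n, (2⁻¹ : ℝ) ^ k) := by
      rw [ENNReal.ofReal_sum_of_nonneg (fun k _ => by positivity)]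
      exact Finset.sum_congr rfl fun k _ => hhalfpow k
    have e2 : ((((m - n : ℕ)) : ℝ≥0∞) + 2) * (2 : ℝ≥0∞)⁻¹ ^ n
        = ENNReal.ofReal ((K : ℝ) * t) := by
      rw [ENNReal.ofReal_mul (by positivity), ht, ← hhalfpow n, ENNReal.ofReal_natCast]
      congr 1
      exact_mod_cast hmn
    rw [e1, e2, ← ENNReal.ofReal_add (by positivity) (by positivity),
      ← ENNReal.ofReal_mul h0.le]
    refine ENNReal.ofReal_le_one.mpr ?_
    rw [hgeom]
    have h4 : (K : ℝ) * t ≤ v * t + 2 * t := by nlinarith [htpos.le]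
    have hεvt : ε * (v * t) = 1 - 2 * ε := by
      rw [hvt]
      field_simp
    have h5 : ε * ((K : ℝ) * t) ≤ (1 - 2 * ε) + ε * (2 * t) := by
      calc ε * ((K : ℝ) * t) ≤ ε * (v * t + 2 * t) := mul_le_mul_of_nonneg_left h4 h0.le
        _ = ε * (v * t) + ε * (2 * t) := by ring
        _ = (1 - 2 * ε) + ε * (2 * t) := by rw [hεvt]
    nlinarith [h5]
  · -- upper bound on treeCapN
    rw [treeCapN]
    have hmem : (((TB.Rn n m)⁻¹ : ℝ≥0) : ℝ≥0∞) ∈ { c | ∃ φ : List Bool → ℝ≥0,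
        (∀ ζ ∈ TB.Eset n m, 1 ≤ ∑' k : ℕ, (φ (pre ζ k) : ℝ≥0∞)) ∧
        (∀ x : List Bool, x.length < n → φ x = 0) ∧
        c = ∑' x : List Bool, (φ x : ℝ≥0∞) ^ 2 } := by
      refine ⟨TB.φ₀ n m, ?_, ?_, ?_⟩
      · intro ζ hζ
        rw [TB.const_φ₀ n m hnm ζ hζ]
      · intro x hx
        exact TB.φ₀_vanish n m x hx
      · exact (TB.energy_φ₀ n m hnm).symm
    refine le_trans (sInf_le hmem) ?_
    rw [← ENNReal.ofReal_coe_nnreal]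
    refine ENNReal.ofReal_le_ofReal ?_
    have hRnr : ((TB.Rn n m : ℝ≥0) : ℝ) = (K : ℝ) * t := by
      show ((((m - n : ℕ) + 2 : ℝ≥0) * (2⁻¹ : ℝ≥0) ^ n : ℝ≥0) : ℝ) = (K : ℝ) * t
      push_cast
      rw [ht]
      congr 1
      rw [← hmn]; push_cast; rw [NNReal.coe_sub (by exact_mod_cast hnm), Nat.cast_sub hnm, NNReal.coe_natCast, NNReal.coe_natCast]
    rw [NNReal.coe_inv, hRnr]
    have hKt : (1 - 2 * ε) / ε ≤ (K : ℝ) * t := by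
      rw [← hvt]
      exact mul_le_mul_of_nonneg_right hKv htpos.le
    calc ((K : ℝ) * t)⁻¹ ≤ ((1 - 2 * ε) / ε)⁻¹ := by
          exact inv_anti₀ (by positivity) hKt
      _ = ε / (1 - 2 * ε) := by rw [inv_div]
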